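/- For every subset J ⊆ {1,…,n} with |J| ≥ 3 and all pairwise distinct elements i, j, k ∈ J, one has θ_{ij}(J)·θ_{jk}(J) = θ_{ik}(J) in 𝕊_n. -/
import Mathlib


set_option synthInstance.maxHeartbeats 1000000
set_option maxHeartbeats 1600000

open MvPolynomial

namespace SnAlg

noncomputable section

variable (K : Type*) [Field K] [CharZero K] (n : ℕ)

/-- The polynomial algebra `P_n = K[x_1,…,x_n]`. -/
abbrev Poly := MvPolynomial (Fin n) K

/-- The operator `x_i` : multiplication by the variable `x_i`. -/
def xop (i : Fin n) : Module.End K (Poly K n) := LinearMap.mulLeft K (X i)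

/-- The operator `y_i`, the one-sided inverse of `x_i`: it sends the monomial `x^α` to
`x^{α - e_i}` if `α_i > 0` and to `0` otherwise. -/
def yop (i : Fin n) : Module.End K (Poly K n) :=
  (MvPolynomial.basisMonomials (Fin n) K).constr K fun α =>
    if α i = 0 then 0
    else (MvPolynomial.basisMonomials (Fin n) K) (α - Finsupp.single i 1)

/-- The algebra `𝕊_n` of one-sided inverses of `P_n`: the subalgebra of `End_K(P_n)`
generated by `x_1,…,x_n,y_1,…,y_n`. -/
def Sn : Subalgebra K (Module.End K (Poly K n)) :=
  Algebra.adjoin K (Set.range (xop K n) ∪ Set.range (yop K n))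

/-- `x_i` as an element of `𝕊_n`. -/
def Xe (i : Fin n) : Sn K n :=
  ⟨xop K n i, Algebra.subset_adjoin (Set.mem_union_left _ ⟨i, rfl⟩)⟩

/-- `y_i` as an element of `𝕊_n`. -/
def Ye (i : Fin n) : Sn K n :=
  ⟨yop K n i, Algebra.subset_adjoin (Set.mem_union_right _ ⟨i, rfl⟩)⟩

/-- The two-sided ideal `𝔭_i` of `𝕊_n` generated by `1 - x_i y_i`. -/
def pIdeal (i : Fin n) : TwoSidedIdeal (Sn K n) :=
  TwoSidedIdeal.span {1 - Xe K n i * Ye K n i}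

/-- `e_J := ∏_{k ∈ J} (1 - x_k y_k)` (the factors pairwise commute; the product is taken in
increasing order of the indices). -/
def eSet (J : Finset (Fin n)) : Sn K n :=
  ((J.sort (· ≤ ·)).map fun k => 1 - Xe K n k * Ye K n k).prod

/-- `μ_J(a) := a e_J + 1 - e_J`. -/
def mu (J : Finset (Fin n)) (a : Sn K n) : Sn K n :=
  a * eSet K n J + 1 - eSet K n J

/-- `θ_{ij}(J) := μ_{J∖i}(y_i) · μ_{J∖j}(x_j)`. -/
def theta (J : Finset (Fin n)) (i j : Fin n) : Sn K n :=
  mu K n (J.erase i) (Ye K n i) * mu K n (J.erase j) (Xe K n j)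

/-- The factor `E_{kl}(i) = x_i^k y_i^l - x_i^{k+1} y_i^{l+1}`. -/
def Efac (i : Fin n) (k l : ℕ) : Sn K n :=
  Xe K n i ^ k * Ye K n i ^ l - Xe K n i ^ (k + 1) * Ye K n i ^ (l + 1)

/-- `E_{αβ} := ∏_{i=1}^n E_{α_i β_i}(i)`. -/
def Eab (α β : Fin n → ℕ) : Sn K n :=
  ((List.finRange n).map fun i => Efac K n i (α i) (β i)).prod

/-- `F_n`, the `K`-linear span of all the `E_{αβ}`. -/
def Fn : Submodule K (Sn K n) :=
  Submodule.span K {f | ∃ α β : Fin n → ℕ, f = Eab K n α β}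

/-- A `K`-linear map is Fredholm if its kernel and cokernel are finite dimensional. -/
def IsFredholm {V U : Type*} [AddCommGroup V] [Module K V] [AddCommGroup U] [Module K U]
    (f : V →ₗ[K] U) : Prop :=
  FiniteDimensional K (LinearMap.ker f) ∧ FiniteDimensional K (U ⧸ LinearMap.range f)

/-- The index of a (Fredholm) linear map: `dim ker - dim coker`. -/
def fredInd {V U : Type*} [AddCommGroup V] [Module K V] [AddCommGroup U] [Module K U]
    (f : V →ₗ[K] U) : ℤ :=
  (Module.finrank K (LinearMap.ker f) : ℤ) - (Module.finrank K (U ⧸ LinearMap.range f) : ℤ)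


lemma yop_monomial (i : Fin n) (α : Fin n →₀ ℕ) :
    yop K n i (monomial α 1) =
      if α i = 0 then 0 else monomial (α - Finsupp.single i 1) 1 := by
  have hb : (monomial α 1 : Poly K n) = MvPolynomial.basisMonomials (Fin n) K α := by
    rw [coe_basisMonomials]
  rw [yop, hb, Module.Basis.constr_basis]
  split <;> simp [coe_basisMonomials]

lemma xop_monomial (i : Fin n) (α : Fin n →₀ ℕ) :
    xop K n i (monomial α 1) = monomial (α + Finsupp.single i 1) 1 := by
  simp [xop, LinearMap.mulLeft_apply, X, monomial_mul, add_comm]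

lemma sub_add_single (i : Fin n) (α : Fin n →₀ ℕ) (h : α i ≠ 0) :
    α - Finsupp.single i 1 + Finsupp.single i 1 = α := by
  ext l
  rcases eq_or_ne i l with rfl | hl
  · simp only [Finsupp.add_apply, Finsupp.tsub_apply, Finsupp.single_eq_same]
    omega
  · simp [Finsupp.add_apply, Finsupp.tsub_apply, Finsupp.single_apply, hl]

lemma idem_monomial (i : Fin n) (α : Fin n →₀ ℕ) :
    ((1 - Xe K n i * Ye K n i : Sn K n) : Module.End K (Poly K n)) (monomial α 1) =
      if α i = 0 then monomial α 1 else 0 := by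
  have : ((1 - Xe K n i * Ye K n i : Sn K n) : Module.End K (Poly K n))
      = 1 - xop K n i * yop K n i := rfl
  rw [this]
  simp only [LinearMap.sub_apply, Module.End.one_apply, Module.End.mul_apply]
  rw [yop_monomial]
  rcases eq_or_ne (α i) 0 with h | h
  · simp [h]
  · simp only [if_neg h]
    rw [xop_monomial, sub_add_single n i α h, sub_self]

lemma list_prod_monomial (L : List (Fin n)) (α : Fin n →₀ ℕ) :
    (((L.map fun k => 1 - Xe K n k * Ye K n k).prod : Sn K n) :
        Module.End K (Poly K n)) (monomial α 1) =
      if ∀ l ∈ L, α l = 0 then monomial α 1 else 0 := by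
  induction L with
  | nil => simp
  | cons a t ih =>
    simp only [List.map_cons, List.prod_cons, MulMemClass.coe_mul, Module.End.mul_apply]
    rw [ih]
    by_cases ht : ∀ l ∈ t, α l = 0
    · rw [if_pos ht, idem_monomial]
      have hc : (∀ l ∈ a :: t, α l = 0) ↔ α a = 0 :=
        ⟨fun h => h a (by simp), fun h => List.forall_mem_cons.2 ⟨h, ht⟩⟩
      simp only [hc]
    · rw [if_neg ht, map_zero, if_neg]
      simp only [List.forall_mem_cons]
      tauto

lemma eSet_monomial (J : Finset (Fin n)) (α : Fin n →₀ ℕ) :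
    ((eSet K n J : Sn K n) : Module.End K (Poly K n)) (monomial α 1) =
      if ∀ l ∈ J, α l = 0 then monomial α 1 else 0 := by
  rw [eSet, list_prod_monomial]
  simp [Finset.mem_sort]

lemma mu_monomial (J : Finset (Fin n)) (a : Sn K n) (α : Fin n →₀ ℕ) :
    ((mu K n J a : Sn K n) : Module.End K (Poly K n)) (monomial α 1) =
      if ∀ l ∈ J, α l = 0 then (a : Module.End K (Poly K n)) (monomial α 1)
      else monomial α 1 := by
  have : ((mu K n J a : Sn K n) : Module.End K (Poly K n)) =
      (a : Module.End K (Poly K n)) * (eSet K n J : Module.End K (Poly K n))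
        + 1 - (eSet K n J : Module.End K (Poly K n)) := rfl
  rw [this]
  simp only [LinearMap.sub_apply, LinearMap.add_apply, Module.End.one_apply,
    Module.End.mul_apply]
  rw [eSet_monomial]
  split
  · simp
  · simp

lemma theta_monomial (J : Finset (Fin n)) (i j : Fin n) (hi : i ∈ J) (hj : j ∈ J)
    (hij : i ≠ j) (α : Fin n →₀ ℕ) :
    ((theta K n J i j : Sn K n) : Module.End K (Poly K n)) (monomial α 1) =
      if ∀ l ∈ J.erase j, α l = 0 then monomial (α + Finsupp.single j 1) 1
      else if ∀ l ∈ J.erase i, α l = 0 then monomial (α - Finsupp.single i 1) 1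
      else monomial α 1 := by
  rw [theta, MulMemClass.coe_mul, Module.End.mul_apply, mu_monomial]
  by_cases hQj : ∀ l ∈ J.erase j, α l = 0
  · rw [if_pos hQj]
    have hx : ((Xe K n j : Sn K n) : Module.End K (Poly K n)) (monomial α 1)
        = monomial (α + Finsupp.single j 1) 1 := xop_monomial K n j α
    rw [hx, mu_monomial]
    simp only [if_pos hQj]
    rw [if_neg]
    intro h
    have hjmem : j ∈ J.erase i := Finset.mem_erase.2 ⟨Ne.symm hij, hj⟩
    have := h j hjmem
    simp [Finsupp.single_apply] at this
  · rw [if_neg hQj, mu_monomial]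
    simp only [if_neg hQj]
    by_cases hQi : ∀ l ∈ J.erase i, α l = 0
    · simp only [if_pos hQi]
      have hy : ((Ye K n i : Sn K n) : Module.End K (Poly K n)) (monomial α 1)
          = if α i = 0 then 0 else monomial (α - Finsupp.single i 1) 1 :=
        yop_monomial K n i α
      have hαi : α i ≠ 0 := by
        intro h0
        apply hQj
        intro l hl
        rcases eq_or_ne l i with rfl | hli
        · exact h0
        · exact hQi l (Finset.mem_erase.2 ⟨hli, (Finset.mem_erase.1 hl).2⟩)
      rw [hy, if_neg hαi]
    · simp only [if_neg hQi]

/-- For `|J| ≥ 3` and pairwise distinct `i, j, k ∈ J`, `θ_{ij}(J)·θ_{jk}(J) = θ_{ik}(J)`. -/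
theorem theta_mul_theta (hn : 3 ≤ n) (J : Finset (Fin n)) (hJ : 3 ≤ J.card)
    (i j k : Fin n) (hi : i ∈ J) (hj : j ∈ J) (hk : k ∈ J)
    (hij : i ≠ j) (hjk : j ≠ k) (hik : i ≠ k) :
    theta K n J i j * theta K n J j k = theta K n J i k := by
  apply Subtype.ext
  apply Module.Basis.ext (MvPolynomial.basisMonomials (Fin n) K)
  intro α
  have hb : (MvPolynomial.basisMonomials (Fin n) K) α = (monomial α 1 : Poly K n) := by
    rw [coe_basisMonomials]
  rw [hb, MulMemClass.coe_mul, Module.End.mul_apply,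
    theta_monomial K n J j k hj hk hjk, theta_monomial K n J i k hi hk hik]
  by_cases hQk : ∀ l ∈ J.erase k, α l = 0
  · rw [if_pos hQk, if_pos hQk, theta_monomial K n J i j hi hj hij]
    have h1 : ¬ ∀ l ∈ J.erase j, (α + Finsupp.single k 1 : Fin n →₀ ℕ) l = 0 := by
      intro h
      have := h k (Finset.mem_erase.2 ⟨Ne.symm hjk, hk⟩)
      simp [Finsupp.single_apply] at this
    have h2 : ¬ ∀ l ∈ J.erase i, (α + Finsupp.single k 1 : Fin n →₀ ℕ) l = 0 := by
      intro h
      have := h k (Finset.mem_erase.2 ⟨Ne.symm hik, hk⟩)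
      simp [Finsupp.single_apply] at this
    rw [if_neg h1, if_neg h2]
  · rw [if_neg hQk, if_neg hQk]
    by_cases hQj : ∀ l ∈ J.erase j, α l = 0
    · rw [if_pos hQj, theta_monomial K n J i j hi hj hij]
      have hαj : α j ≠ 0 := by
        intro h0
        apply hQk
        intro l hl
        rcases eq_or_ne l j with rfl | hlj
        · exact h0
        · exact hQj l (Finset.mem_erase.2 ⟨hlj, (Finset.mem_erase.1 hl).2⟩)
      have h1 : ∀ l ∈ J.erase j, (α - Finsupp.single j 1 : Fin n →₀ ℕ) l = 0 := by
        intro l hl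
        have hlj : j ≠ l := Ne.symm (Finset.mem_erase.1 hl).1
        simp [Finsupp.tsub_apply, Finsupp.single_apply, hlj, hQj l hl]
      rw [if_pos h1, sub_add_single n j α hαj]
      have h2 : ¬ ∀ l ∈ J.erase i, α l = 0 := by
        intro h
        exact hαj (h j (Finset.mem_erase.2 ⟨Ne.symm hij, hj⟩))
      rw [if_neg h2]
    · rw [if_neg hQj, theta_monomial K n J i j hi hj hij, if_neg hQj]

end

end SnAlg
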